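/- Assume hypotheses (H1)–(H3), let q0, q be chosen with 1 − 1/p < 1/q0 < min{β, δα, δ/p, 1/2} and 1/(q0·δ) ≤ 1/q < min{α, 1/p}, and let N ≥ 0. Let [t0,t1] ⊆ [0,T] and let x, y : [t0,t1] → ℝ^d be continuous of finite q-variation with x_{t0} = y_{t0}, ‖x‖_{∞,[t0,t1]} ≤ N and ‖y‖_{∞,[t0,t1]} ≤ N. Then |||g(·,x_·) − g(·,y_·)|||_{q0-var,[t0,t1]} ≤ M'_N · |||x − y|||_{q-var,[t0,t1]} · ( 2 + |||x|||^δ_{q-var,[t0,t1]} + |||y|||^δ_{q-var,[t0,t1]} ), where M'_N := max{L_N, M_N, M} and M := max{L_g, a·T^{1−α}, |g(0,0)| + h(0,T)^β, ‖b‖_{L_{1/(1−α)}}}. -/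

import Mathlib

open scoped BigOperators
open Set

noncomputable section

/-- Euclidean space `ℝ^n`. -/
abbrev Ed (n : ℕ) : Type := EuclideanSpace ℝ (Fin n)

section PVarDefs

variable {E F : Type*} [NormedAddCommGroup E] [NormedSpace ℝ E]
  [NormedAddCommGroup F] [NormedSpace ℝ F]

/-- The set of sums `Σ_i ‖x (t (i+1)) - x (t i)‖ ^ p` over all finite partitions
`a = t 0 < t 1 < ⋯ < t n = b` of `[a,b]`. -/
def pVarSums (p : ℝ) (x : ℝ → E) (a b : ℝ) : Set ℝ :=
  { v | ∃ n : ℕ, ∃ t : Fin (n + 1) → ℝ, StrictMono t ∧ t 0 = a ∧ t (Fin.last n) = b ∧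
      v = ∑ i : Fin n, ‖x (t i.succ) - x (t i.castSucc)‖ ^ p }

/-- The `p`-variation seminorm `|||x|||_{p-var,[a,b]}`. -/
def pVar (p : ℝ) (x : ℝ → E) (a b : ℝ) : ℝ :=
  sSup (pVarSums p x a b) ^ (1 / p)

/-- `x` is of finite `p`-variation on `[a,b]`. -/
def FinitePVar (p : ℝ) (x : ℝ → E) (a b : ℝ) : Prop :=
  BddAbove (pVarSums p x a b)

/-- The `p`-variation norm `‖x‖_{p-var,[a,b]} = ‖x a‖ + |||x|||_{p-var,[a,b]}`. -/
def pVarNorm (p : ℝ) (x : ℝ → E) (a b : ℝ) : ℝ :=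
  ‖x a‖ + pVar p x a b

/-- A control function on `[a,b]`: continuous on the simplex, vanishing on the diagonal,
superadditive and nonnegative. -/
def IsControlOn (a b : ℝ) (w : ℝ → ℝ → ℝ) : Prop :=
  ContinuousOn (fun pr : ℝ × ℝ => w pr.1 pr.2) {pr : ℝ × ℝ | a ≤ pr.1 ∧ pr.1 ≤ pr.2 ∧ pr.2 ≤ b} ∧
  (∀ t : ℝ, a ≤ t → t ≤ b → w t t = 0) ∧
  (∀ s t u : ℝ, a ≤ s → s ≤ t → t ≤ u → u ≤ b → w s t + w t u ≤ w s u) ∧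
  (∀ s t : ℝ, a ≤ s → s ≤ t → t ≤ b → 0 ≤ w s t)

/-- A tagged partition `a = t 0 < t 1 < ⋯ < t n = b` of `[a,b]`, with tags
`tag i ∈ [t i, t (i+1)]`. -/
structure TaggedPartition (a b : ℝ) where
  n : ℕ
  t : Fin (n + 1) → ℝ
  tag : Fin n → ℝ
  mono : StrictMono t
  first : t 0 = a
  last : t (Fin.last n) = b
  tag_mem : ∀ i : Fin n, tag i ∈ Set.Icc (t i.castSucc) (t i.succ)

/-- The mesh of a tagged partition. -/
def TaggedPartition.mesh {a b : ℝ} (P : TaggedPartition a b) : ℝ :=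
  ⨆ i : Fin P.n, (P.t i.succ - P.t i.castSucc)

/-- Riemann–Stieltjes sum of `x` against `ω` along a tagged partition. -/
def RSSum (x : ℝ → E →L[ℝ] F) (ω : ℝ → E) {a b : ℝ} (P : TaggedPartition a b) : F :=
  ∑ i : Fin P.n, x (P.tag i) (ω (P.t i.succ) - ω (P.t i.castSucc))

/-- `v` is the Young integral `∫_a^b x dω`: the Riemann–Stieltjes sums converge to `v`
as the mesh tends to `0`. -/
def IsYoungIntegral (x : ℝ → E →L[ℝ] F) (ω : ℝ → E) (a b : ℝ) (v : F) : Prop :=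
  ∀ ε : ℝ, 0 < ε → ∃ δ : ℝ, 0 < δ ∧
    ∀ P : TaggedPartition a b, P.mesh < δ → ‖RSSum x ω P - v‖ < ε

/-- The Young integral `∫_a^b x dω` (an arbitrary value, `0`, if the limit does not exist). -/
def youngIntegral (x : ℝ → E →L[ℝ] F) (ω : ℝ → E) (a b : ℝ) : F :=
  letI := Classical.propDecidable (∃ v, IsYoungIntegral x ω a b v)
  if hv : ∃ v, IsYoungIntegral x ω a b v then hv.choose else 0

end PVarDefs


open scoped NNReal

section MyHelpers

variable {E : Type*} [NormedAddCommGroup E] [NormedSpace ℝ E]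

lemma exists_nonneg_mem_pVarSums (p : ℝ) (x : ℝ → E) {a b : ℝ} (hab : a ≤ b) :
    ∃ v ∈ pVarSums p x a b, 0 ≤ v := by
  rcases eq_or_lt_of_le hab with rfl | hab
  · refine ⟨0, ⟨0, fun _ => a, ?_, rfl, rfl, by simp⟩, le_refl 0⟩
    intro i j hij
    simp [Fin.lt_def] at hij
  · refine ⟨‖x b - x a‖ ^ p, ⟨1, ![a, b], ?_, rfl, rfl, by simp⟩,
      Real.rpow_nonneg (norm_nonneg _) p⟩
    rw [Fin.strictMono_iff_lt_succ]
    intro i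
    fin_cases i
    simpa using hab

lemma sSup_pVarSums_nonneg (p : ℝ) (x : ℝ → E) {a b : ℝ} (hab : a ≤ b)
    (hbdd : BddAbove (pVarSums p x a b)) : 0 ≤ sSup (pVarSums p x a b) := by
  obtain ⟨v, hv, hv0⟩ := exists_nonneg_mem_pVarSums p x hab
  exact hv0.trans (le_csSup hbdd hv)

lemma pVar_nonneg (p : ℝ) (x : ℝ → E) {a b : ℝ} (hab : a ≤ b)
    (hbdd : BddAbove (pVarSums p x a b)) : 0 ≤ pVar p x a b :=
  Real.rpow_nonneg (sSup_pVarSums_nonneg p x hab hbdd) _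

lemma sum_rpow_le_rpow_sum {n : ℕ} (a : Fin n → ℝ) (ha : ∀ i, 0 ≤ a i) {r : ℝ} (hr : 1 ≤ r) :
    ∑ i, a i ^ r ≤ (∑ i, a i) ^ r := by
  have hr0 : 0 < r := lt_of_lt_of_le one_pos hr
  set S := ∑ i, a i with hS
  have hS0 : 0 ≤ S := Finset.sum_nonneg fun i _ => ha i
  rcases eq_or_lt_of_le hS0 with hSz | hSpos
  · have hall : ∀ i ∈ Finset.univ, a i = 0 :=
      (Finset.sum_eq_zero_iff_of_nonneg (fun i _ => ha i)).mp hSz.symm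
    have : ∀ i ∈ Finset.univ, a i ^ r = 0 := fun i hi => by
      rw [hall i hi, Real.zero_rpow (ne_of_gt hr0)]
    rw [Finset.sum_congr rfl this, Finset.sum_const_zero, ← hSz, Real.zero_rpow (ne_of_gt hr0)]
  · calc ∑ i, a i ^ r ≤ ∑ i, a i * S ^ (r - 1) := by
          apply Finset.sum_le_sum
          intro i _
          rcases eq_or_lt_of_le (ha i) with hz | hpos
          · rw [← hz, Real.zero_rpow (ne_of_gt hr0), zero_mul]
          · have h1 : a i ^ r = a i ^ (1 : ℝ) * a i ^ (r - 1) := by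
              rw [← Real.rpow_add hpos]; ring_nf
            rw [h1, Real.rpow_one]
            refine mul_le_mul_of_nonneg_left ?_ (ha i)
            exact Real.rpow_le_rpow (ha i)
              (Finset.single_le_sum (fun j _ => ha j) (Finset.mem_univ i)) (by linarith)
    _ = S * S ^ (r - 1) := by rw [← Finset.sum_mul]
    _ = S ^ r := by
          rw [show r = 1 + (r - 1) by ring, Real.rpow_add hSpos, Real.rpow_one]
          ring_nf

lemma real_rpow_add_le_add_rpow {a b δ : ℝ} (ha : 0 ≤ a) (hb : 0 ≤ b) (hδ0 : 0 ≤ δ)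
    (hδ1 : δ ≤ 1) : (a + b) ^ δ ≤ a ^ δ + b ^ δ := by
  have := NNReal.rpow_add_le_add_rpow a.toNNReal b.toNNReal hδ0 hδ1
  have hcoe : ((a.toNNReal + b.toNNReal : ℝ≥0) : ℝ) = a + b := by
    simp [Real.coe_toNNReal a ha, Real.coe_toNNReal b hb]
  calc (a + b) ^ δ = (((a.toNNReal + b.toNNReal : ℝ≥0) : ℝ)) ^ δ := by rw [hcoe]
    _ = (((a.toNNReal + b.toNNReal) ^ δ : ℝ≥0) : ℝ) := by rw [← NNReal.coe_rpow]
    _ ≤ (((a.toNNReal ^ δ + b.toNNReal ^ δ) : ℝ≥0) : ℝ) := by exact_mod_cast this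
    _ = a ^ δ + b ^ δ := by
        push_cast
        rw [Real.coe_toNNReal a ha, Real.coe_toNNReal b hb]

lemma ctrl_sum_le {T : ℝ} {h : ℝ → ℝ → ℝ} (hc : IsControlOn 0 T h) :
    ∀ {n : ℕ} (t : Fin (n + 1) → ℝ), Monotone t → 0 ≤ t 0 → t (Fin.last n) ≤ T →
      ∑ i : Fin n, h (t i.castSucc) (t i.succ) ≤ h (t 0) (t (Fin.last n)) := by
  intro n
  induction n with
  | zero =>
    intro t mono h0 hT
    simp only [Finset.univ_eq_empty, Finset.sum_empty]
    exact le_of_eq (hc.2.1 (t 0) h0 (by simpa using hT)).symm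
  | succ n ih =>
    intro t mono h0 hT
    rw [Fin.sum_univ_castSucc]
    have hmono' : Monotone (fun i : Fin (n + 1) => t i.castSucc) := by
      intro a b hab
      exact mono (by simpa [Fin.castSucc_le_castSucc_iff] using hab)
    have hlast : (fun i : Fin (n + 1) => t i.castSucc) (Fin.last n) = t (Fin.last n).castSucc := rfl
    have hle1 : t (Fin.last n).castSucc ≤ t (Fin.last (n + 1)) := mono (Fin.le_last _)
    have ihapp : ∑ i : Fin n, h (t i.castSucc.castSucc) (t i.castSucc.succ) ≤
        h (t 0) (t (Fin.last n).castSucc) := by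
      have := ih (fun i => t i.castSucc) hmono' (by simpa using h0)
        (le_trans hle1 hT)
      simpa only [Fin.succ_castSucc, Fin.castSucc_zero] using this
    have hsup : h (t 0) (t (Fin.last n).castSucc) +
        h (t (Fin.last n).castSucc) (t (Fin.last n).succ) ≤ h (t 0) (t (Fin.last (n + 1))) := by
      rw [Fin.succ_last]
      exact hc.2.2.1 (t 0) (t (Fin.last n).castSucc) (t (Fin.last (n + 1))) h0
        (mono (Fin.zero_le _)) hle1 hT
    calc ∑ i : Fin n, h (t i.castSucc.castSucc) (t i.castSucc.succ) +
          h (t (Fin.last n).castSucc) (t (Fin.last n).succ)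
        ≤ h (t 0) (t (Fin.last n).castSucc) + h (t (Fin.last n).castSucc) (t (Fin.last n).succ) :=
          add_le_add_left ihapp _
      _ ≤ h (t 0) (t (Fin.last (n + 1))) := hsup

lemma ctrl_le_of_subset {T : ℝ} {h : ℝ → ℝ → ℝ} (hc : IsControlOn 0 T h)
    {s s' t' t : ℝ} (h0 : 0 ≤ s) (hss : s ≤ s') (hst : s' ≤ t') (htt : t' ≤ t) (hT : t ≤ T) :
    h s' t' ≤ h s t := by
  have h1 : h s s' + h s' t' ≤ h s t' := hc.2.2.1 s s' t' h0 hss hst (by linarith)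
  have h2 : h s t' + h t' t ≤ h s t := hc.2.2.1 s t' t h0 (by linarith) htt hT
  have h3 : 0 ≤ h s s' := hc.2.2.2 s s' h0 hss (by linarith)
  have h4 : 0 ≤ h t' t := hc.2.2.2 t' t (by linarith) htt hT
  linarith

lemma bddAbove_pVarSums_sub {q : ℝ} (hq : 0 < q) {x y : ℝ → E} {a b : ℝ}
    (hx : BddAbove (pVarSums q x a b)) (hy : BddAbove (pVarSums q y a b)) :
    BddAbove (pVarSums q (fun t => x t - y t) a b) := by
  obtain ⟨Kx, hKx⟩ := hx
  obtain ⟨Ky, hKy⟩ := hy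
  refine ⟨(2 : ℝ) ^ q * (Kx + Ky), ?_⟩
  rintro v ⟨n, t, hm, h0, hl, rfl⟩
  have key : ∀ i : Fin n,
      ‖(x (t i.succ) - y (t i.succ)) - (x (t i.castSucc) - y (t i.castSucc))‖ ^ q ≤
        (2 : ℝ) ^ q * (‖x (t i.succ) - x (t i.castSucc)‖ ^ q +
          ‖y (t i.succ) - y (t i.castSucc)‖ ^ q) := by
    intro i
    set A := ‖x (t i.succ) - x (t i.castSucc)‖ with hA
    set B := ‖y (t i.succ) - y (t i.castSucc)‖ with hB
    have hA0 : 0 ≤ A := norm_nonneg _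
    have hB0 : 0 ≤ B := norm_nonneg _
    have h1 : ‖(x (t i.succ) - y (t i.succ)) - (x (t i.castSucc) - y (t i.castSucc))‖ ≤ A + B := by
      have : (x (t i.succ) - y (t i.succ)) - (x (t i.castSucc) - y (t i.castSucc)) =
          (x (t i.succ) - x (t i.castSucc)) - (y (t i.succ) - y (t i.castSucc)) := by abel
      rw [this]
      exact norm_sub_le _ _
    have h2 : A + B ≤ 2 * max A B := by
      rcases le_total A B with hab | hab
      · rw [max_eq_right hab]; linarith
      · rw [max_eq_left hab]; linarith
    calc ‖(x (t i.succ) - y (t i.succ)) - (x (t i.castSucc) - y (t i.castSucc))‖ ^ q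
        ≤ (2 * max A B) ^ q :=
          Real.rpow_le_rpow (norm_nonneg _) (h1.trans h2) (le_of_lt hq)
      _ = 2 ^ q * (max A B) ^ q :=
          Real.mul_rpow (by norm_num) (le_max_of_le_left hA0)
      _ ≤ 2 ^ q * (A ^ q + B ^ q) := by
          refine mul_le_mul_of_nonneg_left ?_ (Real.rpow_nonneg (by norm_num) q)
          rcases le_total A B with hab | hab
          · rw [max_eq_right hab]
            exact le_add_of_nonneg_left (Real.rpow_nonneg hA0 q)
          · rw [max_eq_left hab]
            exact le_add_of_nonneg_right (Real.rpow_nonneg hB0 q)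
  calc ∑ i : Fin n, ‖(fun t => x t - y t) (t i.succ) - (fun t => x t - y t) (t i.castSucc)‖ ^ q
      ≤ ∑ i : Fin n, (2 : ℝ) ^ q * (‖x (t i.succ) - x (t i.castSucc)‖ ^ q +
          ‖y (t i.succ) - y (t i.castSucc)‖ ^ q) := Finset.sum_le_sum fun i _ => key i
    _ = (2 : ℝ) ^ q * (∑ i : Fin n, ‖x (t i.succ) - x (t i.castSucc)‖ ^ q +
          ∑ i : Fin n, ‖y (t i.succ) - y (t i.castSucc)‖ ^ q) := by
        rw [← Finset.mul_sum, Finset.sum_add_distrib]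
    _ ≤ (2 : ℝ) ^ q * (Kx + Ky) := by
        refine mul_le_mul_of_nonneg_left (add_le_add ?_ ?_) (Real.rpow_nonneg (by norm_num) q)
        · exact hKx ⟨n, t, hm, h0, hl, rfl⟩
        · exact hKy ⟨n, t, hm, h0, hl, rfl⟩

lemma norm_sub_start_le_pVar {q : ℝ} (hq : 0 < q) {z : ℝ → E} {a b s : ℝ}
    (hbdd : BddAbove (pVarSums q z a b)) (hs : s ∈ Set.Icc a b) (hab : a ≤ b) :
    ‖z s - z a‖ ≤ pVar q z a b := by
  have hSup0 : 0 ≤ sSup (pVarSums q z a b) := sSup_pVarSums_nonneg q z hab hbdd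
  have key : ‖z s - z a‖ ^ q ≤ sSup (pVarSums q z a b) := by
    rcases eq_or_lt_of_le hs.1 with heq | has
    · rw [← heq]
      simpa [Real.zero_rpow (ne_of_gt hq)] using hSup0
    rcases eq_or_lt_of_le hs.2 with heq2 | hsb
    · refine le_csSup hbdd ⟨1, ![a, s], ?_, rfl, by show ![a, s] 1 = b; simp [heq2], by simp⟩
      rw [Fin.strictMono_iff_lt_succ]
      intro i; fin_cases i; simpa using has
    · refine le_trans (le_add_of_nonneg_right (Real.rpow_nonneg (norm_nonneg (z b - z s)) q))
        (le_csSup hbdd ⟨2, ![a, s, b], ?_, rfl, by show ![a, s, b] 2 = b; simp, ?_⟩)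
      · rw [Fin.strictMono_iff_lt_succ]
        intro i; fin_cases i <;> simp [has, hsb]
      · simp [Fin.sum_univ_succ]
  calc ‖z s - z a‖ = (‖z s - z a‖ ^ q) ^ (1 / q) := by
        rw [← Real.rpow_mul (norm_nonneg _), mul_one_div_cancel (ne_of_gt hq), Real.rpow_one]
    _ ≤ sSup (pVarSums q z a b) ^ (1 / q) :=
        Real.rpow_le_rpow (Real.rpow_nonneg (norm_nonneg _) q) key (by positivity)
    _ = pVar q z a b := rfl


lemma pvar_piece {q q0 c : ℝ} (hq : 0 < q) (hq0 : 0 < q0) (hc : 0 < c) (hqe : q ≤ c * q0)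
    {x : ℝ → E} {a b : ℝ} (hbdd : BddAbove (pVarSums q x a b)) (hab : a ≤ b)
    {n : ℕ} {τ : Fin (n + 1) → ℝ} (hmono : StrictMono τ) (hfst : τ 0 = a)
    (hlst : τ (Fin.last n) = b) :
    (∑ i : Fin n, (‖x (τ i.succ) - x (τ i.castSucc)‖ ^ c) ^ q0) ^ (1 / q0) ≤
      pVar q x a b ^ c := by
  set S := sSup (pVarSums q x a b) with hSdef
  have hS0 : 0 ≤ S := sSup_pVarSums_nonneg q x hab hbdd
  have hterm : ∀ i : Fin n, (‖x (τ i.succ) - x (τ i.castSucc)‖ ^ c) ^ q0 =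
      (‖x (τ i.succ) - x (τ i.castSucc)‖ ^ q) ^ (c * q0 / q) := by
    intro i
    rw [← Real.rpow_mul (norm_nonneg _), ← Real.rpow_mul (norm_nonneg _)]
    congr 1
    field_simp
  have hsum0 : 0 ≤ ∑ i : Fin n, (‖x (τ i.succ) - x (τ i.castSucc)‖ ^ c) ^ q0 :=
    Finset.sum_nonneg fun i _ => Real.rpow_nonneg (Real.rpow_nonneg (norm_nonneg _) c) q0
  have h1 : ∑ i : Fin n, (‖x (τ i.succ) - x (τ i.castSucc)‖ ^ c) ^ q0 ≤ S ^ (c * q0 / q) := by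
    calc ∑ i : Fin n, (‖x (τ i.succ) - x (τ i.castSucc)‖ ^ c) ^ q0
        = ∑ i : Fin n, (‖x (τ i.succ) - x (τ i.castSucc)‖ ^ q) ^ (c * q0 / q) :=
          Finset.sum_congr rfl fun i _ => hterm i
      _ ≤ (∑ i : Fin n, ‖x (τ i.succ) - x (τ i.castSucc)‖ ^ q) ^ (c * q0 / q) :=
          sum_rpow_le_rpow_sum _ (fun i => Real.rpow_nonneg (norm_nonneg _) q)
            ((one_le_div hq).mpr hqe)
      _ ≤ S ^ (c * q0 / q) := by
          refine Real.rpow_le_rpow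
            (Finset.sum_nonneg fun i _ => Real.rpow_nonneg (norm_nonneg _) q)
            (le_csSup hbdd ⟨n, τ, hmono, hfst, hlst, rfl⟩) (by positivity)
  calc (∑ i : Fin n, (‖x (τ i.succ) - x (τ i.castSucc)‖ ^ c) ^ q0) ^ (1 / q0)
      ≤ (S ^ (c * q0 / q)) ^ (1 / q0) := Real.rpow_le_rpow hsum0 h1 (by positivity)
    _ = (S ^ (1 / q)) ^ c := by
        rw [← Real.rpow_mul hS0, ← Real.rpow_mul hS0]
        congr 1
        field_simp
    _ = pVar q x a b ^ c := rfl

lemma ctrl_piece {T β q0 : ℝ} {h : ℝ → ℝ → ℝ} (hc : IsControlOn 0 T h) (hβ : 0 < β)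
    (hβq0 : 1 ≤ β * q0) (hq0 : 0 < q0) {t0 t1 : ℝ} (ht0 : 0 ≤ t0) (ht01 : t0 ≤ t1)
    (ht1 : t1 ≤ T) {n : ℕ} {τ : Fin (n + 1) → ℝ} (hmono : StrictMono τ) (hfst : τ 0 = t0)
    (hlst : τ (Fin.last n) = t1) :
    (∑ i : Fin n, (h (τ i.castSucc) (τ i.succ) ^ β) ^ q0) ^ (1 / q0) ≤ h 0 T ^ β := by
  have hmem : ∀ j : Fin (n + 1), t0 ≤ τ j ∧ τ j ≤ t1 := fun j =>
    ⟨hfst ▸ hmono.monotone (Fin.zero_le j), hlst ▸ hmono.monotone (Fin.le_last j)⟩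
  have hh0 : ∀ i : Fin n, 0 ≤ h (τ i.castSucc) (τ i.succ) := fun i =>
    hc.2.2.2 _ _ (ht0.trans (hmem _).1) (hmono ((Fin.castSucc_lt_succ : i.castSucc < i.succ))).le
      ((hmem _).2.trans ht1)
  have hh0T : 0 ≤ h 0 T := hc.2.2.2 0 T le_rfl (ht0.trans (ht01.trans ht1)) le_rfl
  have hterm : ∀ i : Fin n, (h (τ i.castSucc) (τ i.succ) ^ β) ^ q0 =
      h (τ i.castSucc) (τ i.succ) ^ (β * q0) := fun i => (Real.rpow_mul (hh0 i) β q0).symm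
  have hctrlsum : ∑ i : Fin n, h (τ i.castSucc) (τ i.succ) ≤ h 0 T := by
    have h1 := ctrl_sum_le hc τ hmono.monotone (hfst ▸ ht0) (hlst ▸ ht1)
    rw [hfst, hlst] at h1
    exact h1.trans (ctrl_le_of_subset hc le_rfl ht0 ht01 ht1 le_rfl)
  have h1 : ∑ i : Fin n, (h (τ i.castSucc) (τ i.succ) ^ β) ^ q0 ≤ h 0 T ^ (β * q0) := by
    calc ∑ i : Fin n, (h (τ i.castSucc) (τ i.succ) ^ β) ^ q0
        = ∑ i : Fin n, h (τ i.castSucc) (τ i.succ) ^ (β * q0) :=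
          Finset.sum_congr rfl fun i _ => hterm i
      _ ≤ (∑ i : Fin n, h (τ i.castSucc) (τ i.succ)) ^ (β * q0) :=
          sum_rpow_le_rpow_sum _ hh0 hβq0
      _ ≤ h 0 T ^ (β * q0) := Real.rpow_le_rpow
          (Finset.sum_nonneg fun i _ => hh0 i) hctrlsum (by positivity)
  have hsum0 : 0 ≤ ∑ i : Fin n, (h (τ i.castSucc) (τ i.succ) ^ β) ^ q0 :=
    Finset.sum_nonneg fun i _ => Real.rpow_nonneg (Real.rpow_nonneg (hh0 i) β) q0
  calc (∑ i : Fin n, (h (τ i.castSucc) (τ i.succ) ^ β) ^ q0) ^ (1 / q0)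
      ≤ (h 0 T ^ (β * q0)) ^ (1 / q0) := Real.rpow_le_rpow hsum0 h1 (by positivity)
    _ = h 0 T ^ β := by
        rw [← Real.rpow_mul hh0T]
        congr 1
        field_simp

end MyHelpers

set_option maxHeartbeats 2000000

/-- Lemma `lemma2`(iii): under (H1)–(H3), for paths `x, y` of finite
`q`-variation on `[t0,t1] ⊆ [0,T]` with `x t0 = y t0` and sup-norm bounded by `N`,
`|||g(·,x_·) - g(·,y_·)|||_{q0-var} ≤ M'_N |||x - y|||_{q-var} (2 + |||x|||^δ + |||y|||^δ)`. -/
theorem stmt8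
    {d m : ℕ} (p T : ℝ) (hp1 : 1 < p) (hp2 : p < 2) (hT : 0 < T)
    (f : ℝ → Ed d → Ed d) (g : ℝ → Ed d → (Ed m →L[ℝ] Ed d))
    (hf : ContinuousOn (fun pr : ℝ × Ed d => f pr.1 pr.2) (Set.Icc 0 T ×ˢ Set.univ))
    (hg : ContinuousOn (fun pr : ℝ × Ed d => g pr.1 pr.2) (Set.Icc 0 T ×ˢ Set.univ))
    (Dg : ℝ → Ed d → (Ed d →L[ℝ] Ed m →L[ℝ] Ed d))
    (hDg : ∀ t ∈ Set.Icc (0:ℝ) T, ∀ x : Ed d, HasFDerivAt (g t) (Dg t x) x)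
    (β δ Lg : ℝ) (hβ0 : 0 < β) (hβ1 : β ≤ 1) (hδ0 : 0 < δ) (hδ1 : δ ≤ 1) (hLg : 0 < Lg)
    (h : ℝ → ℝ → ℝ) (hctrl : IsControlOn 0 T h)
    (MN : ℝ → ℝ) (hMN : ∀ N : ℝ, 0 ≤ N → 0 < MN N)
    (H1i : ∀ t ∈ Set.Icc (0:ℝ) T, ∀ x y : Ed d, ‖g t x - g t y‖ ≤ Lg * ‖x - y‖)
    (H1ii : ∀ N : ℝ, 0 ≤ N → ∀ t ∈ Set.Icc (0:ℝ) T, ∀ x y : Ed d, ‖x‖ ≤ N → ‖y‖ ≤ N →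
      ‖Dg t x - Dg t y‖ ≤ MN N * ‖x - y‖ ^ δ)
    (H1iii : ∀ s t : ℝ, 0 ≤ s → s < t → t ≤ T → ∀ x : Ed d,
      ‖g t x - g s x‖ + ‖Dg t x - Dg s x‖ ≤ h s t ^ β)
    (a α : ℝ) (b : ℝ → ℝ) (ha : 0 < a) (hα1 : 1 / 2 ≤ α) (hα2 : α < 1)
    (hbmem : IntervalIntegrable (fun s => |b s| ^ (1 / (1 - α))) MeasureTheory.volume 0 T)
    (LN : ℝ → ℝ) (hLN : ∀ N : ℝ, 0 ≤ N → 0 < LN N)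
    (H2i : ∀ N : ℝ, 0 ≤ N → ∀ t ∈ Set.Icc (0:ℝ) T, ∀ x y : Ed d, ‖x‖ ≤ N → ‖y‖ ≤ N →
      ‖f t x - f t y‖ ≤ LN N * ‖x - y‖)
    (H2ii : ∀ t ∈ Set.Icc (0:ℝ) T, ∀ x : Ed d, ‖f t x‖ ≤ a * ‖x‖ + b t)
    (H3a : p - 1 < δ) (H3b : 1 - 1 / p < β) (H3c : 1 - 1 / p < δ * α)
    (q0 q : ℝ)
    (hq0a : 1 - 1 / p < 1 / q0)
    (hq0b : 1 / q0 < min (min β (δ * α)) (min (δ / p) (1 / 2)))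
    (hqa : 1 / (q0 * δ) ≤ 1 / q) (hqb : 1 / q < min α (1 / p))
    (t0 t1 : ℝ) (ht0 : 0 ≤ t0) (ht01 : t0 ≤ t1) (ht1 : t1 ≤ T)
    (N : ℝ) (hN : 0 ≤ N)
    (x y : ℝ → Ed d)
    (hx : ContinuousOn x (Set.Icc t0 t1)) (hxq : FinitePVar q x t0 t1)
    (hy : ContinuousOn y (Set.Icc t0 t1)) (hyq : FinitePVar q y t0 t1)
    (hxy0 : x t0 = y t0)
    (hxN : ∀ t ∈ Set.Icc t0 t1, ‖x t‖ ≤ N) (hyN : ∀ t ∈ Set.Icc t0 t1, ‖y t‖ ≤ N) :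
    pVar q0 (fun t => g t (x t) - g t (y t)) t0 t1 ≤
      max (max (LN N) (MN N)) (max (max Lg (a * T ^ (1 - α))) (max (‖g 0 0‖ + h 0 T ^ β) ((∫ s in (0:ℝ)..T, |b s| ^ (1 / (1 - α))) ^ (1 - α)))) *
        pVar q (fun t => x t - y t) t0 t1 *
        (2 + pVar q x t0 t1 ^ δ + pVar q y t0 t1 ^ δ) := by
  classical
  -- basic positivity facts
  have hp0 : (0:ℝ) < p := lt_trans one_pos hp1
  have h1p : 0 < 1 - 1 / p := by
    have : 1 / p < 1 := by rw [div_lt_one hp0]; exact hp1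
    linarith
  have hq0inv : 0 < 1 / q0 := lt_trans h1p hq0a
  have hq0pos : 0 < q0 := one_div_pos.mp hq0inv
  have hq0half : 1 / q0 < 1 / 2 :=
    hq0b.trans_le ((min_le_right _ _).trans (min_le_right _ _))
  have hq02 : 2 < q0 := by
    have := (div_lt_div_iff₀ hq0pos two_pos).mp hq0half
    linarith
  have hq01 : 1 ≤ q0 := by linarith
  have hβq0 : 1 / q0 < β := hq0b.trans_le ((min_le_left _ _).trans (min_le_left _ _))
  have hβq0' : 1 ≤ β * q0 := by
    have h1 := mul_lt_mul_of_pos_right hβq0 hq0pos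
    rw [one_div_mul_cancel (ne_of_gt hq0pos)] at h1
    linarith
  have hqδpos : 0 < q0 * δ := mul_pos hq0pos hδ0
  have hqinvpos : 0 < 1 / q := lt_of_lt_of_le (by positivity) hqa
  have hqpos : 0 < q := one_div_pos.mp hqinvpos
  have hqq0δ : q ≤ q0 * δ := by
    have := (div_le_div_iff₀ hqδpos hqpos).mp hqa
    linarith
  have hq1 : 1 < q := by
    have h1 : 1 / q < 1 / p := lt_of_lt_of_le hqb (min_le_right _ _)
    have h2 := (div_lt_div_iff₀ hqpos hp0).mp h1
    linarith
  have hqleq0 : q ≤ q0 := hqq0δ.trans (by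
    calc q0 * δ ≤ q0 * 1 := mul_le_mul_of_nonneg_left hδ1 hq0pos.le
      _ = q0 := mul_one q0)
  have hr1 : 1 ≤ q0 / q := (one_le_div hqpos).mpr hqleq0
  -- the constant
  set K := max (max (LN N) (MN N)) (max (max Lg (a * T ^ (1 - α)))
    (max (‖g 0 0‖ + h 0 T ^ β)
      ((∫ s in (0:ℝ)..T, |b s| ^ (1 / (1 - α))) ^ (1 - α)))) with hKdef
  have hLgK : Lg ≤ K := le_max_of_le_right (le_max_of_le_left (le_max_left _ _))
  have hMNK : MN N ≤ K := le_max_of_le_left (le_max_right _ _)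
  have hhTK : h 0 T ^ β ≤ K := by
    have h1 : h 0 T ^ β ≤ ‖g 0 0‖ + h 0 T ^ β := le_add_of_nonneg_left (norm_nonneg _)
    exact h1.trans (le_max_of_le_right (le_max_of_le_right (le_max_left _ _)))
  have hK0 : 0 < K := lt_of_lt_of_le hLg hLgK
  -- paths
  set z := fun t => x t - y t with hzdef
  set w := fun t => g t (x t) - g t (y t) with hwdef
  have hbz : BddAbove (pVarSums q z t0 t1) := bddAbove_pVarSums_sub hqpos hxq hyq
  have hVx0 : 0 ≤ pVar q x t0 t1 := pVar_nonneg q x ht01 hxq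
  have hVy0 : 0 ≤ pVar q y t0 t1 := pVar_nonneg q y ht01 hyq
  have hD0 : 0 ≤ pVar q z t0 t1 := pVar_nonneg q z ht01 hbz
  have hsupz : ∀ s ∈ Set.Icc t0 t1, ‖z s‖ ≤ pVar q z t0 t1 := by
    intro s hs
    have h0 : z t0 = 0 := by simp [hzdef, hxy0]
    have h1 := norm_sub_start_le_pVar hqpos hbz hs ht01
    rwa [h0, sub_zero] at h1
  have hfac0 : 0 ≤ 2 + pVar q x t0 t1 ^ δ + pVar q y t0 t1 ^ δ := by
    have h1 := Real.rpow_nonneg hVx0 δ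
    have h2 := Real.rpow_nonneg hVy0 δ
    linarith
  set R := K * pVar q z t0 t1 * (2 + pVar q x t0 t1 ^ δ + pVar q y t0 t1 ^ δ) with hRdef
  have hR0 : 0 ≤ R := mul_nonneg (mul_nonneg hK0.le hD0) hfac0
  -- main per-partition bound
  have hub : ∀ v ∈ pVarSums q0 w t0 t1, v ≤ R ^ q0 := by
    rintro v ⟨n, τ, hmono, hfirst, hlast, rfl⟩
    have hmem : ∀ j : Fin (n + 1), τ j ∈ Set.Icc t0 t1 := fun j =>
      ⟨hfirst ▸ hmono.monotone (Fin.zero_le j), hlast ▸ hmono.monotone (Fin.le_last j)⟩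
    have hmem0T : ∀ j : Fin (n + 1), τ j ∈ Set.Icc (0:ℝ) T := fun j =>
      ⟨ht0.trans (hmem j).1, (hmem j).2.trans ht1⟩
    have hh0 : ∀ i : Fin n, 0 ≤ h (τ i.castSucc) (τ i.succ) := fun i =>
      hctrl.2.2.2 _ _ (hmem0T _).1 (hmono ((Fin.castSucc_lt_succ : i.castSucc < i.succ))).le (hmem0T _).2
    set A := fun i : Fin n => pVar q z t0 t1 * h (τ i.castSucc) (τ i.succ) ^ β with hAdef
    set B := fun i : Fin n => Lg * ‖z (τ i.succ) - z (τ i.castSucc)‖ with hBdef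
    set C := fun i : Fin n => MN N * pVar q z t0 t1 *
      (‖x (τ i.succ) - x (τ i.castSucc)‖ ^ δ + ‖y (τ i.succ) - y (τ i.castSucc)‖ ^ δ) with hCdef
    have hA0 : ∀ i, 0 ≤ A i := fun i =>
      mul_nonneg hD0 (Real.rpow_nonneg (hh0 i) β)
    have hB0 : ∀ i, 0 ≤ B i := fun i => mul_nonneg hLg.le (norm_nonneg _)
    have hC0 : ∀ i, 0 ≤ C i := fun i => by
      refine mul_nonneg (mul_nonneg (hMN N hN).le hD0) ?_
      have h1 := Real.rpow_nonneg (norm_nonneg (x (τ i.succ) - x (τ i.castSucc))) δ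
      have h2 := Real.rpow_nonneg (norm_nonneg (y (τ i.succ) - y (τ i.castSucc))) δ
      linarith
    -- the per-increment estimate
    have hinc : ∀ i : Fin n, ‖w (τ i.succ) - w (τ i.castSucc)‖ ≤ A i + B i + C i := by
      intro i
      set s := τ i.castSucc with hs
      set u := τ i.succ with hu
      have hsu : s < u := hmono ((Fin.castSucc_lt_succ : i.castSucc < i.succ))
      have hsmem : s ∈ Set.Icc t0 t1 := hmem _
      have humem : u ∈ Set.Icc t0 t1 := hmem _
      have hs0T : s ∈ Set.Icc (0:ℝ) T := hmem0T _
      have hu0T : u ∈ Set.Icc (0:ℝ) T := hmem0T _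
      have hzs : ‖x s - y s‖ ≤ pVar q z t0 t1 := hsupz s hsmem
      have hzu : ‖x u - y u‖ ≤ pVar q z t0 t1 := hsupz u humem
      have hhsu0 : 0 ≤ h s u ^ β := Real.rpow_nonneg (hh0 i) β
      -- time part
      have hAbound : ‖(g u (x u) - g u (y u)) - (g s (x u) - g s (y u))‖ ≤
          pVar q z t0 t1 * h s u ^ β := by
        have hder : ∀ v : Ed d, HasFDerivWithinAt (fun v => g u v - g s v)
            (Dg u v - Dg s v) Set.univ v := fun v =>
          ((hDg u hu0T v).sub (hDg s hs0T v)).hasFDerivWithinAt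
        have hbound : ∀ v ∈ (Set.univ : Set (Ed d)), ‖Dg u v - Dg s v‖ ≤ h s u ^ β := by
          intro v _
          have h1 := H1iii s u hs0T.1 hsu hu0T.2 v
          have h2 : (0:ℝ) ≤ ‖g u v - g s v‖ := norm_nonneg _
          linarith
        have hmv := convex_univ.norm_image_sub_le_of_norm_hasFDerivWithin_le
          (fun v _ => hder v) hbound (Set.mem_univ (y u)) (Set.mem_univ (x u))
        calc ‖(g u (x u) - g u (y u)) - (g s (x u) - g s (y u))‖
            = ‖(g u (x u) - g s (x u)) - (g u (y u) - g s (y u))‖ := by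
              rw [sub_sub_sub_comm]
          _ ≤ h s u ^ β * ‖x u - y u‖ := by simpa using hmv
          _ ≤ h s u ^ β * pVar q z t0 t1 := mul_le_mul_of_nonneg_left hzu hhsu0
          _ = pVar q z t0 t1 * h s u ^ β := mul_comm _ _
      -- space part
      have hBbound : ‖(g s (x u) - g s (y u)) - (g s (x s) - g s (y s))‖ ≤
          Lg * ‖z u - z s‖ +
            MN N * pVar q z t0 t1 * (‖x u - x s‖ ^ δ + ‖y u - y s‖ ^ δ) := by
        set CB := Lg * ‖z u - z s‖ +
          MN N * pVar q z t0 t1 * (‖x u - x s‖ ^ δ + ‖y u - y s‖ ^ δ) with hCBdef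
        set G := fun θ : ℝ => g s (y u + θ • (x u - y u)) - g s (y s + θ • (x s - y s))
          with hGdef
        set G' := fun θ : ℝ => (Dg s (y u + θ • (x u - y u))) (x u - y u) -
          (Dg s (y s + θ • (x s - y s))) (x s - y s) with hG'def
        have hpath : ∀ (c v : Ed d) (θ : ℝ), HasDerivAt (fun θ : ℝ => c + θ • v) v θ := by
          intro c v θ
          have h1 : HasDerivAt (fun θ : ℝ => θ • v) v θ := by
            simpa using (hasDerivAt_id θ).smul_const v
          exact h1.const_add c
        have hGder : ∀ θ ∈ Set.Icc (0:ℝ) 1, HasDerivWithinAt G (G' θ) (Set.Icc 0 1) θ := by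
          intro θ _
          have h1 := HasFDerivAt.comp_hasDerivAt θ
            (hDg s hs0T (y u + θ • (x u - y u))) (hpath (y u) (x u - y u) θ)
          have h2 := HasFDerivAt.comp_hasDerivAt θ
            (hDg s hs0T (y s + θ • (x s - y s))) (hpath (y s) (x s - y s) θ)
          exact ((h1.sub h2)).hasDerivWithinAt
        have hGbound : ∀ θ ∈ Set.Ico (0:ℝ) 1, ‖G' θ‖ ≤ CB := by
          intro θ hθ
          have hθ0 : 0 ≤ θ := hθ.1
          have hθ1 : θ ≤ 1 := le_of_lt hθ.2
          set ξ := y u + θ • (x u - y u) with hξdef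
          set η := y s + θ • (x s - y s) with hηdef
          have hξc : ξ = (1 - θ) • (y u) + θ • (x u) := by
            rw [hξdef, smul_sub, sub_smul, one_smul]; abel
          have hηc : η = (1 - θ) • (y s) + θ • (x s) := by
            rw [hηdef, smul_sub, sub_smul, one_smul]; abel
          have hcomb : ∀ (a b : Ed d), ‖a‖ ≤ N → ‖b‖ ≤ N →
              ‖(1 - θ) • a + θ • b‖ ≤ N := by
            intro a b haN hbN
            calc ‖(1 - θ) • a + θ • b‖ ≤ ‖(1 - θ) • a‖ + ‖θ • b‖ := norm_add_le _ _
              _ = (1 - θ) * ‖a‖ + θ * ‖b‖ := by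
                  rw [norm_smul, norm_smul, Real.norm_eq_abs, Real.norm_eq_abs,
                    abs_of_nonneg (by linarith), abs_of_nonneg hθ0]
              _ ≤ (1 - θ) * N + θ * N := add_le_add
                  (mul_le_mul_of_nonneg_left haN (by linarith))
                  (mul_le_mul_of_nonneg_left hbN hθ0)
              _ = N := by ring
          have hξN : ‖ξ‖ ≤ N := hξc ▸ hcomb _ _ (hyN u humem) (hxN u humem)
          have hηN : ‖η‖ ≤ N := hηc ▸ hcomb _ _ (hyN s hsmem) (hxN s hsmem)
          have hd : ξ - η = (1 - θ) • (y u - y s) + θ • (x u - x s) := by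
            rw [hξc, hηc, smul_sub, smul_sub]; abel
          have hdn : ‖ξ - η‖ ≤ ‖x u - x s‖ + ‖y u - y s‖ := by
            rw [hd]
            calc ‖(1 - θ) • (y u - y s) + θ • (x u - x s)‖
                ≤ ‖(1 - θ) • (y u - y s)‖ + ‖θ • (x u - x s)‖ := norm_add_le _ _
              _ = (1 - θ) * ‖y u - y s‖ + θ * ‖x u - x s‖ := by
                  rw [norm_smul, norm_smul, Real.norm_eq_abs, Real.norm_eq_abs,
                    abs_of_nonneg (by linarith), abs_of_nonneg hθ0]
              _ ≤ 1 * ‖y u - y s‖ + 1 * ‖x u - x s‖ := add_le_add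
                  (mul_le_mul_of_nonneg_right (by linarith) (norm_nonneg _))
                  (mul_le_mul_of_nonneg_right (by linarith) (norm_nonneg _))
              _ = ‖x u - x s‖ + ‖y u - y s‖ := by ring
          have hsplit : G' θ = (Dg s ξ) ((x u - y u) - (x s - y s)) +
              ((Dg s ξ) - (Dg s η)) (x s - y s) := by
            rw [hG'def]
            simp only [ContinuousLinearMap.sub_apply, map_sub]
            abel
          have hDgLip : ‖Dg s ξ‖ ≤ Lg := by
            refine (hDg s hs0T ξ).le_of_lip' hLg.le ?_
            exact Filter.Eventually.of_forall fun v => H1i s hs0T v ξ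
          have hδsum0 : 0 ≤ ‖x u - x s‖ ^ δ + ‖y u - y s‖ ^ δ := by
            have h1 := Real.rpow_nonneg (norm_nonneg (x u - x s)) δ
            have h2 := Real.rpow_nonneg (norm_nonneg (y u - y s)) δ
            linarith
          have hHolder : ‖(Dg s ξ) - (Dg s η)‖ ≤
              MN N * (‖x u - x s‖ ^ δ + ‖y u - y s‖ ^ δ) := by
            calc ‖(Dg s ξ) - (Dg s η)‖ ≤ MN N * ‖ξ - η‖ ^ δ :=
                H1ii N hN s hs0T ξ η hξN hηN
              _ ≤ MN N * ((‖x u - x s‖ + ‖y u - y s‖) ^ δ) :=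
                mul_le_mul_of_nonneg_left
                  (Real.rpow_le_rpow (norm_nonneg _) hdn hδ0.le) (hMN N hN).le
              _ ≤ MN N * (‖x u - x s‖ ^ δ + ‖y u - y s‖ ^ δ) :=
                mul_le_mul_of_nonneg_left
                  (real_rpow_add_le_add_rpow (norm_nonneg _) (norm_nonneg _) hδ0.le hδ1)
                  (hMN N hN).le
          calc ‖G' θ‖ ≤ ‖(Dg s ξ) ((x u - y u) - (x s - y s))‖ +
              ‖((Dg s ξ) - (Dg s η)) (x s - y s)‖ := by
                rw [hsplit]; exact norm_add_le _ _
            _ ≤ Lg * ‖z u - z s‖ +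
                (MN N * (‖x u - x s‖ ^ δ + ‖y u - y s‖ ^ δ)) * pVar q z t0 t1 := by
                refine add_le_add ?_ ?_
                · calc ‖(Dg s ξ) ((x u - y u) - (x s - y s))‖
                      ≤ ‖Dg s ξ‖ * ‖(x u - y u) - (x s - y s)‖ :=
                        ContinuousLinearMap.le_opNorm _ _
                    _ ≤ Lg * ‖z u - z s‖ :=
                        mul_le_mul hDgLip (le_of_eq rfl) (norm_nonneg _) hLg.le
                · calc ‖((Dg s ξ) - (Dg s η)) (x s - y s)‖
                      ≤ ‖(Dg s ξ) - (Dg s η)‖ * ‖x s - y s‖ :=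
                        ContinuousLinearMap.le_opNorm _ _
                    _ ≤ (MN N * (‖x u - x s‖ ^ δ + ‖y u - y s‖ ^ δ)) * pVar q z t0 t1 :=
                        mul_le_mul hHolder hzs (norm_nonneg _)
                          (mul_nonneg (hMN N hN).le hδsum0)
            _ = CB := by rw [hCBdef]; ring
        have hmvt := norm_image_sub_le_of_norm_deriv_le_segment' hGder hGbound 1
          (Set.right_mem_Icc.mpr zero_le_one)
        have hG1 : G 1 = g s (x u) - g s (x s) := by simp [hGdef]
        have hG0 : G 0 = g s (y u) - g s (y s) := by simp [hGdef]
        have hfin : ‖(g s (x u) - g s (x s)) - (g s (y u) - g s (y s))‖ ≤ CB := by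
          rw [← hG1, ← hG0]
          simpa using hmvt
        calc ‖(g s (x u) - g s (y u)) - (g s (x s) - g s (y s))‖
            = ‖(g s (x u) - g s (x s)) - (g s (y u) - g s (y s))‖ := by
              rw [sub_sub_sub_comm]
          _ ≤ CB := hfin
      have hsplitw : w u - w s =
          ((g u (x u) - g u (y u)) - (g s (x u) - g s (y u))) +
            ((g s (x u) - g s (y u)) - (g s (x s) - g s (y s))) := by
        simp only [hwdef]
        abel
      calc ‖w u - w s‖ ≤ ‖(g u (x u) - g u (y u)) - (g s (x u) - g s (y u))‖ +
            ‖(g s (x u) - g s (y u)) - (g s (x s) - g s (y s))‖ := by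
            rw [hsplitw]; exact norm_add_le _ _
        _ ≤ pVar q z t0 t1 * h s u ^ β +
            (Lg * ‖z u - z s‖ +
              MN N * pVar q z t0 t1 * (‖x u - x s‖ ^ δ + ‖y u - y s‖ ^ δ)) :=
            add_le_add hAbound hBbound
        _ = A i + B i + C i := by
            simp only [hAdef, hBdef, hCdef, ← hs, ← hu]
            ring
    -- assemble the three Lp pieces
    have eA : (∑ i, A i ^ q0) ^ (1 / q0) ≤ pVar q z t0 t1 * h 0 T ^ β := by
      have h1 : ∀ i : Fin n, A i ^ q0 =
          pVar q z t0 t1 ^ q0 * (h (τ i.castSucc) (τ i.succ) ^ β) ^ q0 := fun i => by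
        rw [hAdef]
        exact Real.mul_rpow hD0 (Real.rpow_nonneg (hh0 i) β)
      have h2 : (∑ i, A i ^ q0) = pVar q z t0 t1 ^ q0 *
          ∑ i : Fin n, (h (τ i.castSucc) (τ i.succ) ^ β) ^ q0 := by
        rw [Finset.mul_sum]
        exact Finset.sum_congr rfl fun i _ => h1 i
      have hp1' : 0 ≤ ∑ i : Fin n, (h (τ i.castSucc) (τ i.succ) ^ β) ^ q0 :=
        Finset.sum_nonneg fun i _ => Real.rpow_nonneg (Real.rpow_nonneg (hh0 i) β) q0
      rw [h2, Real.mul_rpow (Real.rpow_nonneg hD0 q0) hp1',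
        ← Real.rpow_mul hD0, mul_one_div_cancel (ne_of_gt hq0pos), Real.rpow_one]
      exact mul_le_mul_of_nonneg_left
        (ctrl_piece hctrl hβ0 hβq0' hq0pos ht0 ht01 ht1 hmono hfirst hlast) hD0
    have eB : (∑ i, B i ^ q0) ^ (1 / q0) ≤ Lg * pVar q z t0 t1 := by
      have h1 : ∀ i : Fin n, B i ^ q0 =
          Lg ^ q0 * ((‖z (τ i.succ) - z (τ i.castSucc)‖ ^ (1:ℝ)) ^ q0) := fun i => by
        rw [hBdef, Real.rpow_one]
        exact Real.mul_rpow hLg.le (norm_nonneg _)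
      have h2 : (∑ i, B i ^ q0) = Lg ^ q0 *
          ∑ i : Fin n, (‖z (τ i.succ) - z (τ i.castSucc)‖ ^ (1:ℝ)) ^ q0 := by
        rw [Finset.mul_sum]
        exact Finset.sum_congr rfl fun i _ => h1 i
      have hp1' : 0 ≤ ∑ i : Fin n, (‖z (τ i.succ) - z (τ i.castSucc)‖ ^ (1:ℝ)) ^ q0 :=
        Finset.sum_nonneg fun i _ =>
          Real.rpow_nonneg (Real.rpow_nonneg (norm_nonneg _) 1) q0
      rw [h2, Real.mul_rpow (Real.rpow_nonneg hLg.le q0) hp1',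
        ← Real.rpow_mul hLg.le, mul_one_div_cancel (ne_of_gt hq0pos), Real.rpow_one]
      refine mul_le_mul_of_nonneg_left ?_ hLg.le
      have := pvar_piece hqpos hq0pos one_pos (by linarith : q ≤ 1 * q0) hbz ht01
        hmono hfirst hlast
      simpa [Real.rpow_one] using this
    have eC : (∑ i, C i ^ q0) ^ (1 / q0) ≤ MN N * pVar q z t0 t1 *
        (pVar q x t0 t1 ^ δ + pVar q y t0 t1 ^ δ) := by
      have hMD0 : 0 ≤ MN N * pVar q z t0 t1 := mul_nonneg (hMN N hN).le hD0
      have hax0 : ∀ i : Fin n, 0 ≤ ‖x (τ i.succ) - x (τ i.castSucc)‖ ^ δ := fun i =>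
        Real.rpow_nonneg (norm_nonneg _) δ
      have hay0 : ∀ i : Fin n, 0 ≤ ‖y (τ i.succ) - y (τ i.castSucc)‖ ^ δ := fun i =>
        Real.rpow_nonneg (norm_nonneg _) δ
      have h1 : ∀ i : Fin n, C i ^ q0 = (MN N * pVar q z t0 t1) ^ q0 *
          ((‖x (τ i.succ) - x (τ i.castSucc)‖ ^ δ +
            ‖y (τ i.succ) - y (τ i.castSucc)‖ ^ δ) ^ q0) := fun i => by
        rw [hCdef]
        exact Real.mul_rpow hMD0 (by positivity)
      have h2 : (∑ i, C i ^ q0) = (MN N * pVar q z t0 t1) ^ q0 *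
          ∑ i : Fin n, (‖x (τ i.succ) - x (τ i.castSucc)‖ ^ δ +
            ‖y (τ i.succ) - y (τ i.castSucc)‖ ^ δ) ^ q0 := by
        rw [Finset.mul_sum]
        exact Finset.sum_congr rfl fun i _ => h1 i
      have hp1' : 0 ≤ ∑ i : Fin n, (‖x (τ i.succ) - x (τ i.castSucc)‖ ^ δ +
          ‖y (τ i.succ) - y (τ i.castSucc)‖ ^ δ) ^ q0 :=
        Finset.sum_nonneg fun i _ => Real.rpow_nonneg (by positivity) q0
      rw [h2, Real.mul_rpow (Real.rpow_nonneg hMD0 q0) hp1',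
        ← Real.rpow_mul hMD0, mul_one_div_cancel (ne_of_gt hq0pos), Real.rpow_one]
      refine mul_le_mul_of_nonneg_left ?_ hMD0
      have hmink := Real.Lp_add_le_of_nonneg (Finset.univ : Finset (Fin n))
        (f := fun i => ‖x (τ i.succ) - x (τ i.castSucc)‖ ^ δ)
        (g := fun i => ‖y (τ i.succ) - y (τ i.castSucc)‖ ^ δ) hq01
        (fun i _ => hax0 i) (fun i _ => hay0 i)
      refine hmink.trans (add_le_add ?_ ?_)
      · exact pvar_piece hqpos hq0pos hδ0 (by linarith : q ≤ δ * q0) hxq ht01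
          hmono hfirst hlast
      · exact pvar_piece hqpos hq0pos hδ0 (by linarith : q ≤ δ * q0) hyq ht01
          hmono hfirst hlast
    -- Minkowski
    have hmink2 : (∑ i, (A i + B i + C i) ^ q0) ^ (1 / q0) ≤
        (∑ i, A i ^ q0) ^ (1 / q0) + (∑ i, B i ^ q0) ^ (1 / q0) +
          (∑ i, C i ^ q0) ^ (1 / q0) := by
      have hm1 := Real.Lp_add_le_of_nonneg (Finset.univ : Finset (Fin n))
        (f := fun i => A i + B i) (g := C) hq01
        (fun i _ => add_nonneg (hA0 i) (hB0 i)) (fun i _ => hC0 i)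
      have hm2 := Real.Lp_add_le_of_nonneg (Finset.univ : Finset (Fin n))
        (f := A) (g := B) hq01 (fun i _ => hA0 i) (fun i _ => hB0 i)
      calc (∑ i, (A i + B i + C i) ^ q0) ^ (1 / q0)
          ≤ (∑ i, (A i + B i) ^ q0) ^ (1 / q0) + (∑ i, C i ^ q0) ^ (1 / q0) := hm1
        _ ≤ (∑ i, A i ^ q0) ^ (1 / q0) + (∑ i, B i ^ q0) ^ (1 / q0) +
            (∑ i, C i ^ q0) ^ (1 / q0) := add_le_add_left hm2 _
    have htot : (∑ i, (A i + B i + C i) ^ q0) ^ (1 / q0) ≤ R := by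
      refine hmink2.trans ?_
      have h1 : (∑ i, A i ^ q0) ^ (1 / q0) + (∑ i, B i ^ q0) ^ (1 / q0) +
          (∑ i, C i ^ q0) ^ (1 / q0) ≤
          pVar q z t0 t1 * h 0 T ^ β + Lg * pVar q z t0 t1 +
            MN N * pVar q z t0 t1 * (pVar q x t0 t1 ^ δ + pVar q y t0 t1 ^ δ) :=
        add_le_add (add_le_add eA eB) eC
      refine h1.trans ?_
      rw [hRdef]
      have hb1 : pVar q z t0 t1 * h 0 T ^ β ≤ K * pVar q z t0 t1 := by
        rw [mul_comm K]
        exact mul_le_mul_of_nonneg_left hhTK hD0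
      have hb2 : Lg * pVar q z t0 t1 ≤ K * pVar q z t0 t1 :=
        mul_le_mul_of_nonneg_right hLgK hD0
      have hb3 : MN N * pVar q z t0 t1 * (pVar q x t0 t1 ^ δ + pVar q y t0 t1 ^ δ) ≤
          K * pVar q z t0 t1 * (pVar q x t0 t1 ^ δ + pVar q y t0 t1 ^ δ) := by
        refine mul_le_mul_of_nonneg_right (mul_le_mul_of_nonneg_right hMNK hD0) ?_
        have h1 := Real.rpow_nonneg hVx0 δ
        have h2 := Real.rpow_nonneg hVy0 δ
        linarith
      have hsplitR : K * pVar q z t0 t1 * (2 + pVar q x t0 t1 ^ δ + pVar q y t0 t1 ^ δ) =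
          K * pVar q z t0 t1 + K * pVar q z t0 t1 +
            K * pVar q z t0 t1 * (pVar q x t0 t1 ^ δ + pVar q y t0 t1 ^ δ) := by ring
      rw [hsplitR]
      exact add_le_add (add_le_add hb1 hb2) hb3
    -- conclude the partition bound
    have hsum0 : 0 ≤ ∑ i : Fin n, (A i + B i + C i) ^ q0 :=
      Finset.sum_nonneg fun i _ => Real.rpow_nonneg
        (add_nonneg (add_nonneg (hA0 i) (hB0 i)) (hC0 i)) q0
    calc ∑ i : Fin n, ‖w (τ i.succ) - w (τ i.castSucc)‖ ^ q0
        ≤ ∑ i : Fin n, (A i + B i + C i) ^ q0 :=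
          Finset.sum_le_sum fun i _ =>
            Real.rpow_le_rpow (norm_nonneg _) (hinc i) hq0pos.le
      _ = ((∑ i : Fin n, (A i + B i + C i) ^ q0) ^ (1 / q0)) ^ q0 := by
          rw [← Real.rpow_mul hsum0, one_div_mul_cancel (ne_of_gt hq0pos), Real.rpow_one]
      _ ≤ R ^ q0 := Real.rpow_le_rpow (Real.rpow_nonneg hsum0 _) htot hq0pos.le
  -- from upper bound on sums to the sup
  have hbw : BddAbove (pVarSums q0 w t0 t1) := ⟨R ^ q0, fun v hv => hub v hv⟩
  have hsup0 : 0 ≤ sSup (pVarSums q0 w t0 t1) := sSup_pVarSums_nonneg q0 w ht01 hbw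
  have hsuple : sSup (pVarSums q0 w t0 t1) ≤ R ^ q0 :=
    Real.sSup_le hub (Real.rpow_nonneg hR0 q0)
  calc pVar q0 w t0 t1 = sSup (pVarSums q0 w t0 t1) ^ (1 / q0) := rfl
    _ ≤ (R ^ q0) ^ (1 / q0) := Real.rpow_le_rpow hsup0 hsuple (by positivity)
    _ = R := by
        rw [← Real.rpow_mul hR0, mul_one_div_cancel (ne_of_gt hq0pos), Real.rpow_one]
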